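/- arXiv:1109.4434 — 4 statements merged into one kernel-verified Lean document; each statement's English description precedes it below -/
import Mathlib

section
/- For any Grassmann necklace I = (I_1, ..., I_n), each I_j belongs to the positroid M_I, i.e., I_i ≤_i I_j for all i, j ∈ [n]. -/
def cpos {n : ℕ} (i a : Fin n) : ℕ := ((a - i : Fin n) : ℕ)

def CyclicallyOrdered {n : ℕ} (a b c d : Fin n) : Prop :=
  0 < cpos a b ∧ cpos a b < cpos a c ∧ cpos a c < cpos a d

instance {n : ℕ} (a b c d : Fin n) : Decidable (CyclicallyOrdered a b c d) := by
  unfold CyclicallyOrdered; infer_instance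

def WeaklySeparated {n : ℕ} (I J : Finset (Fin n)) : Prop :=
  ¬ ∃ a b a' b' : Fin n, CyclicallyOrdered a b a' b' ∧
    a ∈ I \ J ∧ a' ∈ I \ J ∧ b ∈ J \ I ∧ b' ∈ J \ I

def cycIco {n : ℕ} (i j : Fin n) : Finset (Fin n) :=
  Finset.univ.filter (fun x => cpos i x < cpos i j)

def cycIcc {n : ℕ} (i j : Fin n) : Finset (Fin n) :=
  Finset.univ.filter (fun x => cpos i x ≤ cpos i j)

def cycOpen {n : ℕ} (i j : Fin n) : Finset (Fin n) :=
  Finset.univ.filter (fun x => 0 < cpos i x ∧ cpos i x < cpos i j)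

def IsGrassmannNecklace {n : ℕ} [NeZero n] (k : ℕ) (I : Fin n → Finset (Fin n)) : Prop :=
  (∀ i, (I i).card = k) ∧ (∀ i, I i \ {i} ⊆ I (i + 1)) ∧ (∀ i, i ∉ I i → I (i + 1) = I i)

def leShift {n : ℕ} (i : Fin n) (A B : Finset (Fin n)) : Prop :=
  List.Forall₂ (· ≤ ·) ((A.image (fun x => x - i)).sort (· ≤ ·))
    ((B.image (fun x => x - i)).sort (· ≤ ·))

def MemPositroid {n : ℕ} (I : Fin n → Finset (Fin n)) (J : Finset (Fin n)) : Prop :=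
  ∀ i, leShift i (I i) J

def IsWSCollection {n : ℕ} (C : Finset (Finset (Fin n))) : Prop :=
  ∀ X ∈ C, ∀ Y ∈ C, WeaklySeparated X Y

def IsMaxWSCollection {n : ℕ} (k : ℕ) (C : Finset (Finset (Fin n))) : Prop :=
  (∀ X ∈ C, X.card = k) ∧ IsWSCollection C ∧
  ∀ C' : Finset (Finset (Fin n)), C ⊆ C' → (∀ X ∈ C', X.card = k) → IsWSCollection C' → C' = C

section Auxiliary

variable {n : ℕ} [NeZero n]

open Fin.NatCast Fin.CommRing

lemma cpos_lt (i a : Fin n) : cpos i a < n := (a - i).isLt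

lemma cpos_add (i : Fin n) (e : ℕ) (he : e < n) : cpos i (i + (e : Fin n)) = e := by
  simp only [cpos, add_sub_cancel_left, Fin.val_natCast, Nat.mod_eq_of_lt he]

lemma gn_survive {k : ℕ} {I : Fin n → Finset (Fin n)} (hI : IsGrassmannNecklace k I)
    (i : Fin n) (d : ℕ) (x : Fin n) (hx : x ∈ I i)
    (h : ∀ e : ℕ, e < d → x ≠ i + (e : Fin n)) : x ∈ I (i + (d : Fin n)) := by
  induction d with
  | zero => simpa using hx
  | succ d ih =>
    have h1 : x ∈ I (i + (d : Fin n)) := ih (fun e he => h e (by omega))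
    have h2 : x ≠ i + (d : Fin n) := h d (by omega)
    have h3 : x ∈ I (i + (d : Fin n) + 1) :=
      hI.2.1 (i + (d : Fin n)) (by simp [Finset.mem_sdiff, h1, h2])
    have : ((d + 1 : ℕ) : Fin n) = (d : Fin n) + 1 := by push_cast; ring
    rw [this, ← add_assoc]
    exact h3

lemma gn_factA {k : ℕ} {I : Fin n → Finset (Fin n)} (hI : IsGrassmannNecklace k I)
    (i j x : Fin n) (hx : x ∈ I i) (h : cpos i j ≤ cpos i x) : x ∈ I j := by
  have key : x ∈ I (i + ((cpos i j : ℕ) : Fin n)) := by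
    refine gn_survive hI i (cpos i j) x hx (fun e he heq => ?_)
    have : cpos i x = e := heq ▸ cpos_add i e (lt_trans he (cpos_lt i j))
    omega
  have : i + ((cpos i j : ℕ) : Fin n) = j := by
    show i + (((j - i : Fin n) : ℕ) : Fin n) = j
    rw [Fin.cast_val_eq_self]; ring
  rwa [this] at key

lemma gn_factB {k : ℕ} {I : Fin n → Finset (Fin n)} (hI : IsGrassmannNecklace k I)
    (i j x : Fin n) (hx : x ∈ I j) (h : cpos i x < cpos i j) : x ∈ I i := by
  set c := cpos i j with hc
  have hc0 : 0 < c := by omega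
  have hji : j ≠ i := by
    intro heq; rw [heq] at hc; simp [cpos] at hc; omega
  have hsum : c + cpos j i = n := by
    have h0 : (j - i) + (i - j) = (0 : Fin n) := by ring
    have := congrArg Fin.val h0
    rw [Fin.val_add] at this
    have h1 : cpos j i < n := cpos_lt j i
    have h2 : c < n := cpos_lt i j
    have h3 : 0 < cpos j i := by
      rcases Nat.eq_zero_or_pos (cpos j i) with h4 | h4
      · exfalso
        have hz : i - j = 0 := Fin.ext (by simpa [Fin.val_zero, cpos] using h4)
        exact hji (sub_eq_zero.mp hz).symm
      · exact h4
    rw [Fin.val_zero] at this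
    change (cpos i j + cpos j i) % n = 0 at this
    rcases lt_or_ge (cpos i j + cpos j i) n with hlt | hge
    · rw [Nat.mod_eq_of_lt hlt] at this; omega
    · rw [Nat.mod_eq_sub_mod hge, Nat.mod_eq_of_lt (by omega)] at this; omega
  have key : x ∈ I (j + ((cpos j i : ℕ) : Fin n)) := by
    refine gn_survive hI j (cpos j i) x hx (fun e he heq => ?_)
    have hcv : ((j - i : Fin n) : ℕ) = c := rfl
    have hx2 : cpos i x = c + e := by
      rw [heq]
      show (((j + (e : Fin n)) - i : Fin n) : ℕ) = _
      have h5 : (j + (e : Fin n)) - i = (j - i) + (e : Fin n) := by ring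
      rw [h5, Fin.val_add, Fin.val_natCast, hcv,
        Nat.mod_eq_of_lt (show e < n by omega),
        Nat.mod_eq_of_lt (show c + e < n by omega)]
    omega
  have : j + ((cpos j i : ℕ) : Fin n) = i := by
    show j + (((i - j : Fin n) : ℕ) : Fin n) = i
    rw [Fin.cast_val_eq_self]; ring
  rwa [this] at key

lemma forall₂_of_prefix {α : Type*} [LinearOrder α] (A B : Finset α)
    (hcard : A.card = B.card)
    (h : ∀ m : α, (B.filter (· ≤ m)).card ≤ (A.filter (· ≤ m)).card) :
    List.Forall₂ (· ≤ ·) (A.sort (· ≤ ·)) (B.sort (· ≤ ·)) := by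
  set lA := A.sort (· ≤ ·) with hlA
  set lB := B.sort (· ≤ ·) with hlB
  rw [List.forall₂_iff_get]
  have hlen : lA.length = lB.length := by
    simp [hlA, hlB, Finset.length_sort, hcard]
  refine ⟨hlen, fun t h₁ h₂ => ?_⟩
  by_contra hc
  push_neg at hc
  set m := lB.get ⟨t, h₂⟩ with hm
  have hB : t + 1 ≤ (B.filter (· ≤ m)).card := by
    have hsub : (lB.take (t+1)).toFinset ⊆ B.filter (· ≤ m) := by
      intro x hx
      rw [List.mem_toFinset] at hx
      obtain ⟨s, hs, hxs⟩ := List.mem_iff_getElem.mp hx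
      have hslen : s < lB.length := by
        have : (lB.take (t+1)).length = min (t+1) lB.length := List.length_take; omega
      rw [List.getElem_take] at hxs
      have hle : x ≤ m := by
        rw [← hxs]
        exact (B.pairwise_sort (· ≤ ·)).rel_get_of_le
          (a := ⟨s, hslen⟩) (b := ⟨t, h₂⟩) (by
            simp only [Fin.le_def]
            have : (lB.take (t+1)).length = min (t+1) lB.length := List.length_take; omega)
      refine Finset.mem_filter.mpr ⟨?_, hle⟩
      rw [← Finset.mem_sort (· ≤ ·)]
      exact List.mem_of_mem_take hx
    have hnd : (lB.take (t+1)).Nodup :=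
      (B.sort_nodup (· ≤ ·)).sublist (lB.take_sublist (t+1))
    calc t + 1 = (lB.take (t+1)).length := by
          rw [List.length_take]; omega
      _ = (lB.take (t+1)).toFinset.card := (List.toFinset_card_of_nodup hnd).symm
      _ ≤ (B.filter (· ≤ m)).card := Finset.card_le_card hsub
  have hA : (A.filter (· ≤ m)).card ≤ t := by
    have hsub : A.filter (· ≤ m) ⊆ (lA.take t).toFinset := by
      intro x hx
      rw [Finset.mem_filter] at hx
      have hxl : x ∈ lA := (Finset.mem_sort (· ≤ ·)).mpr hx.1
      obtain ⟨s, hs, hxs⟩ := List.mem_iff_getElem.mp hxl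
      have hst : s < t := by
        by_contra hst
        push_neg at hst
        have : lA.get ⟨t, h₁⟩ ≤ x := by
          rw [← hxs]
          exact (A.pairwise_sort (· ≤ ·)).rel_get_of_le (a := ⟨t, h₁⟩) (b := ⟨s, hs⟩) hst
        exact absurd (this.trans hx.2) (not_le.mpr hc)
      rw [List.mem_toFinset]
      refine List.mem_iff_getElem.mpr ⟨s, ?_, ?_⟩
      · rw [List.length_take]; omega
      · rw [List.getElem_take]; exact hxs
    calc (A.filter (· ≤ m)).card ≤ (lA.take t).toFinset.card := Finset.card_le_card hsub
      _ ≤ (lA.take t).length := List.toFinset_card_le _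
      _ ≤ t := by rw [List.length_take]; omega
  have := h m
  omega

end Auxiliary

/-- Every member of a Grassmann necklace lies in the associated positroid:
I_i ≤_i I_j for all i, j. -/
theorem stmt_1 {n k : ℕ} [NeZero n] (I : Fin n → Finset (Fin n))
    (hI : IsGrassmannNecklace k I) :
    ∀ i j : Fin n, leShift i (I i) (I j) := by
  intro i j
  unfold leShift
  have hinj : Function.Injective (fun x : Fin n => x - i) := sub_left_injective
  apply forall₂_of_prefix
  · rw [Finset.card_image_of_injective _ hinj, Finset.card_image_of_injective _ hinj,
      hI.1 i, hI.1 j]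
  · intro m
    have himg : ∀ (S : Finset (Fin n)),
        ((S.image (fun x => x - i)).filter (· ≤ m)).card
          = (S.filter (fun x => x - i ≤ m)).card := by
      intro S
      rw [← Finset.card_image_of_injective (S.filter (fun x => x - i ≤ m)) hinj]
      congr 1
      ext y
      simp only [Finset.mem_filter, Finset.mem_image]
      constructor
      · rintro ⟨⟨x, hx, rfl⟩, hy⟩; exact ⟨x, ⟨hx, hy⟩, rfl⟩
      · rintro ⟨x, ⟨hx, hy⟩, rfl⟩; exact ⟨⟨x, hx, rfl⟩, hy⟩
    rw [himg, himg]
    have hle : ∀ x : Fin n, (x - i ≤ m) ↔ cpos i x ≤ (m : ℕ) := fun x => Iff.rfl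
    rcases lt_or_ge (m : ℕ) (cpos i j) with hm | hm
    · apply Finset.card_le_card
      intro x hx
      rw [Finset.mem_filter] at hx ⊢
      exact ⟨gn_factB hI i j x hx.1 (by have := (hle x).mp hx.2; omega), hx.2⟩
    · have hcompl : ∀ (S : Finset (Fin n)),
          (S.filter (fun x => x - i ≤ m)).card
            + (S.filter (fun x => ¬ (x - i ≤ m))).card = S.card := fun S =>
        Finset.card_filter_add_card_filter_not _
      have hsub : (I i).filter (fun x => ¬ (x - i ≤ m))
          ⊆ (I j).filter (fun x => ¬ (x - i ≤ m)) := by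
        intro x hx
        rw [Finset.mem_filter] at hx ⊢
        refine ⟨gn_factA hI i j x hx.1 ?_, hx.2⟩
        have := hx.2
        rw [hle] at this
        omega
      have h1 := hcompl (I i)
      have h2 := hcompl (I j)
      have h3 := Finset.card_le_card hsub
      rw [hI.1 i] at h1
      rw [hI.1 j] at h2
      omega
end

section
/- A Grassmann necklace (I_1, ..., I_n) has connected associated decorated permutation if and only if the sets I_1, ..., I_n are pairwise distinct. More precisely, for i ≠ j, I_i = I_j if and only if π maps the cyclic interval [i,j) to itself. -/
def Noncrossing {n : ℕ} (P : Finpartition (Finset.univ : Finset (Fin n))) : Prop :=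
  ∀ a b c d : Fin n, CyclicallyOrdered a b c d →
    ∀ S ∈ P.parts, ∀ T ∈ P.parts, a ∈ S → c ∈ S → b ∈ T → d ∈ T → S = T

namespace Stmt6Aux
open Fin.NatCast
set_option linter.unusedSectionVars false

variable {n : ℕ} [NeZero n]

theorem cpos_eq (i x : Fin n) :
    cpos i x = if i.val ≤ x.val then x.val - i.val else x.val + n - i.val := by
  have hi := i.isLt; have hx := x.isLt
  unfold cpos
  rw [Fin.sub_def]
  simp only
  rcases le_or_gt i.val x.val with h | h
  · rw [if_pos h]
    have h2 : n - i.val + x.val = n + (x.val - i.val) := by omega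
    rw [h2, Nat.add_mod_left, Nat.mod_eq_of_lt (by omega)]
  · rw [if_neg (by omega), Nat.mod_eq_of_lt (by omega)]
    omega

theorem cpos_lt (i x : Fin n) : cpos i x < n := (x - i).isLt

theorem cpos_self (i : Fin n) : cpos i i = 0 := by simp [cpos]

theorem cpos_eq_zero {i x : Fin n} (h : cpos i x = 0) : x = i := by
  unfold cpos at h
  have h2 : x - i = 0 := Fin.ext (by simpa using h)
  exact sub_eq_zero.mp h2

theorem cpos_inj {i x y : Fin n} (h : cpos i x = cpos i y) : x = y :=
  sub_left_injective (Fin.ext h)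

theorem cpos_add (i t : Fin n) : cpos i (i + t) = t.val := by
  unfold cpos; rw [add_sub_cancel_left]

theorem add_cpos (i x : Fin n) : i + ((cpos i x : ℕ) : Fin n) = x := by
  unfold cpos; rw [Fin.cast_val_eq_self, add_sub_cancel]

theorem cpos_add_nat (i : Fin n) {t : ℕ} (h : t < n) : cpos i (i + (t : ℕ)) = t := by
  rw [cpos_add, Fin.val_cast_of_lt h]

theorem mem_cycIco {i j x : Fin n} : x ∈ cycIco i j ↔ cpos i x < cpos i j := by
  simp [cycIco]

theorem mem_cycIco_compl {i j : Fin n} (hij : i ≠ j) (x : Fin n) :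
    x ∈ cycIco j i ↔ x ∉ cycIco i j := by
  have h1 := cpos_lt i x; have h2 := cpos_lt i j
  have h3 := i.isLt; have h4 := j.isLt; have h5 := x.isLt
  have hij' : i.val ≠ j.val := by simpa [Fin.ext_iff] using hij
  rw [mem_cycIco, mem_cycIco, cpos_eq j x, cpos_eq j i, cpos_eq i j, cpos_eq i x]
  split_ifs <;> omega

theorem not_crossed {i j a b c d : Fin n} (ha : a ∈ cycIco i j) (hc : c ∈ cycIco i j)
    (hb : b ∉ cycIco i j) (hd : d ∉ cycIco i j) : ¬ CyclicallyOrdered a b c d := by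
  rw [mem_cycIco] at ha hc hb hd
  rintro ⟨h1, h2, h3⟩
  have e1 := cpos_eq a b; have e2 := cpos_eq a c; have e3 := cpos_eq a d
  have q1 := cpos_eq i a; have q2 := cpos_eq i b; have q3 := cpos_eq i c
  have q4 := cpos_eq i d; have q5 := cpos_eq i j
  have l1 := a.isLt; have l2 := b.isLt; have l3 := c.isLt; have l4 := d.isLt
  have l5 := i.isLt; have l6 := j.isLt
  rw [e1] at h1 h2; rw [e2] at h2 h3; rw [e3] at h3
  split_ifs at h1 h2 h3 q1 q2 q3 q4 q5 <;> omega

theorem cast_succ (m : ℕ) (i : Fin n) : i + ((m + 1 : ℕ) : Fin n) = (i + (m : ℕ)) + 1 := by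
  push_cast; abel

theorem mem_of_lt_cpos (i j : Fin n) {t : ℕ} (h : t < cpos i j) : i + (t : ℕ) ∈ cycIco i j := by
  rw [mem_cycIco, cpos_add_nat i (lt_trans h (cpos_lt i j))]; exact h

variable {k : ℕ} {I : Fin n → Finset (Fin n)} {π : Equiv.Perm (Fin n)}
  (hI : IsGrassmannNecklace k I)
  (hπ : ∀ i : Fin n, (i ∈ I i → I (i + 1) = insert (π i) (I i \ {i})) ∧
      (i ∉ I i → π i = i))

include hI

theorem step_mono {x y : Fin n} (h1 : x ≠ y) (hy : y ∈ I x) : y ∈ I (x + 1) :=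
  hI.2.1 x (by simp [Finset.mem_sdiff, hy, Ne.symm h1])

include hπ

theorem step_sub2 (x : Fin n) : I (x + 1) ⊆ insert (π x) (I x) := by
  by_cases hx : x ∈ I x
  · rw [(hπ x).1 hx]
    exact Finset.insert_subset_insert _ (Finset.sdiff_subset)
  · rw [hI.2.2 x hx]
    exact Finset.subset_insert _ _

theorem step_iff {x y : Fin n} (h1 : x ≠ y) (h2 : π x ≠ y) : y ∈ I (x + 1) ↔ y ∈ I x := by
  constructor
  · intro hy
    rcases Finset.mem_insert.mp (step_sub2 hI hπ x hy) with h | h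
    · exact absurd h.symm h2
    · exact h
  · exact step_mono hI h1

theorem pi_not_mem {x : Fin n} (hx : x ∈ I x) : π x ∉ I x \ {x} := by
  intro hmem
  have hcard : (I (x+1)).card = k := hI.1 _
  rw [(hπ x).1 hx, Finset.insert_eq_self.mpr hmem] at hcard
  have : (I x \ {x}).card = k - 1 := by
    rw [← Finset.erase_eq, Finset.card_erase_of_mem hx, hI.1]
  have hk : 1 ≤ k := by
    have := hI.1 x
    have := Finset.card_pos.mpr ⟨x, hx⟩
    omega
  omega

omit hπ in
theorem walkA (i y : Fin n) (m : ℕ) (h : ∀ t < m, i + (t : ℕ) ≠ y) (hy : y ∈ I i) :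
    y ∈ I (i + (m : ℕ)) := by
  induction m with
  | zero => simpa using hy
  | succ m ih =>
    rw [cast_succ]
    exact step_mono hI (h m (by omega)) (ih fun t ht => h t (by omega))

theorem walkC (i y : Fin n) (m : ℕ)
    (h : ∀ t < m, i + (t : ℕ) ≠ y ∧ π (i + (t : ℕ)) ≠ y) :
    y ∈ I (i + (m : ℕ)) ↔ y ∈ I i := by
  induction m with
  | zero => simp
  | succ m ih =>
    rw [cast_succ, step_iff hI hπ (h m (by omega)).1 (h m (by omega)).2]
    exact ih fun t ht => h t (by omega)

theorem compl_invariant {i j : Fin n} (hij : i ≠ j)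
    (H : ∀ x ∈ cycIco i j, π x ∈ cycIco i j) : ∀ x ∈ cycIco j i, π x ∈ cycIco j i := by
  have himg : (cycIco i j).image π = cycIco i j := by
    apply Finset.eq_of_subset_of_card_le
    · intro z hz
      obtain ⟨x, hx, rfl⟩ := Finset.mem_image.mp hz
      exact H x hx
    · rw [Finset.card_image_of_injective _ π.injective]
  intro x hx
  rw [mem_cycIco_compl hij] at hx ⊢
  intro hcon
  rw [← himg] at hcon
  obtain ⟨x', hx', hxx⟩ := Finset.mem_image.mp hcon
  exact hx (π.injective hxx ▸ hx')

theorem partA {i j : Fin n} (hij : i ≠ j) :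
    I i = I j ↔ ∀ x ∈ cycIco i j, π x ∈ cycIco i j := by
  have hj_eq : i + ((cpos i j : ℕ) : Fin n) = j := add_cpos i j
  constructor
  · intro E x hx
    by_contra hcon
    set y := π x with hy
    have hyne : ∀ z ∈ cycIco i j, z ≠ y := fun z hz hzy => hcon (hzy ▸ hz)
    have hxI : x ∈ I x := by
      by_contra hxI
      exact hcon (by rw [hy, (hπ x).2 hxI]; exact hx)
    have hynx : y ≠ x := fun h => hcon (h ▸ hx)
    have hyIx : y ∉ I x := fun h => pi_not_mem hI hπ hxI (Finset.mem_sdiff.mpr ⟨h, Finset.notMem_singleton.mpr hynx⟩)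
    have hyIx1 : y ∈ I (x + 1) := by
      rw [(hπ x).1 hxI]; exact Finset.mem_insert_self _ _
    set t := cpos i x with ht
    set m := cpos i j with hm
    have htm : t < m := mem_cycIco.mp hx
    have hmn : m < n := cpos_lt i j
    have hx_eq : i + ((t : ℕ) : Fin n) = x := add_cpos i x
    -- y ∈ I j
    have hyIj : y ∈ I j := by
      have base : y ∈ I (i + ((t + 1 : ℕ) : Fin n)) := by
        rw [cast_succ, hx_eq]; exact hyIx1
      have step : y ∈ I ((i + ((t + 1 : ℕ) : Fin n)) + ((m - (t+1) : ℕ) : Fin n)) := by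
        apply walkA hI _ y (m - (t+1)) _ base
        intro s hs
        have : (i + ((t + 1 : ℕ) : Fin n)) + ((s : ℕ) : Fin n) = i + ((t + 1 + s : ℕ) : Fin n) := by
          push_cast; abel
        rw [this]
        exact hyne _ (mem_of_lt_cpos i j (by omega))
      have : (i + ((t + 1 : ℕ) : Fin n)) + ((m - (t+1) : ℕ) : Fin n) = j := by
        rw [add_assoc, ← Nat.cast_add]
        have : t + 1 + (m - (t+1)) = m := by omega
        rw [this, hj_eq]
      rwa [this] at step
    have hyIi : y ∈ I i := E ▸ hyIj
    have : y ∈ I x := by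
      rw [← hx_eq]
      apply walkA hI i y t _ hyIi
      intro s hs
      exact hyne _ (mem_of_lt_cpos i j (by omega))
    exact hyIx this
  · intro H
    have Hc := compl_invariant hI hπ hij H
    have hji : j ≠ i := Ne.symm hij
    have hi_eq : j + ((cpos j i : ℕ) : Fin n) = i := add_cpos j i
    ext y
    by_cases hy : y ∈ cycIco i j
    · have hy' : y ∉ cycIco j i := fun h => (mem_cycIco_compl hij y).mp h hy
      have := walkC hI hπ j y (cpos j i) ?_
      · rw [hi_eq] at this; rw [this]
      · intro s hs
        have hmem := mem_of_lt_cpos j i hs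
        exact ⟨fun h => hy' (h ▸ hmem), fun h => hy' (h ▸ Hc _ hmem)⟩
    · have := walkC hI hπ i y (cpos i j) ?_
      · rw [hj_eq] at this; rw [this]
      · intro s hs
        have hmem := mem_of_lt_cpos i j hs
        exact ⟨fun h => hy (h ▸ hmem), fun h => hy (h ▸ H _ hmem)⟩


omit hI hπ
theorem cpos_pos {i j : Fin n} (hij : i ≠ j) : 0 < cpos i j :=
  Nat.pos_of_ne_zero fun h => hij (cpos_eq_zero h).symm

theorem self_mem_cycIco {i j : Fin n} (hij : i ≠ j) : i ∈ cycIco i j := by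
  rw [mem_cycIco, cpos_self]; exact cpos_pos hij

theorem cpos_pred (a : Fin n) : cpos a (a - 1) = n - 1 := by
  have h1 : (0:ℕ) < n := Fin.pos_iff_nonempty.mpr ⟨a⟩
  have : a - 1 - a = ((n - 1 : ℕ) : Fin n) := by
    rw [sub_sub_cancel_left, eq_comm, ← add_eq_zero_iff_eq_neg]; ext; simp [Fin.val_add, Fin.val_cast_of_lt (show n - 1 < n by omega), Nat.sub_add_cancel h1]
  unfold cpos
  rw [this, Fin.val_cast_of_lt (by omega)]

theorem closed_pred_eq_univ {T : Finset (Fin n)} (hne : T.Nonempty)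
    (hcl : ∀ t ∈ T, t - 1 ∈ T) : T = Finset.univ := by
  obtain ⟨a, ha⟩ := hne
  have key : ∀ s : ℕ, a - (s : ℕ) ∈ T := by
    intro s
    induction s with
    | zero => simpa using ha
    | succ s ih =>
      have : a - ((s + 1 : ℕ) : Fin n) = (a - (s : ℕ)) - 1 := by push_cast; abel
      rw [this]; exact hcl _ ih
  apply Finset.eq_univ_of_forall
  intro y
  have : y = a - (((a - y : Fin n) : ℕ) : Fin n) := by
    rw [Fin.cast_val_eq_self, sub_sub_cancel]
  rw [this]; exact key _

theorem stmt6_main (hI : IsGrassmannNecklace k I)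
    (hπ : ∀ i : Fin n, (i ∈ I i → I (i + 1) = insert (π i) (I i \ {i})) ∧
      (i ∉ I i → π i = i)) :
    (∀ i j : Fin n, i ≠ j → (I i = I j ↔ ∀ x ∈ cycIco i j, π x ∈ cycIco i j)) ∧
    ((¬ ∃ P : Finpartition (Finset.univ : Finset (Fin n)), Noncrossing P ∧
        2 ≤ P.parts.card ∧ ∀ S ∈ P.parts, ∀ x ∈ S, π x ∈ S) ↔
      ∀ i j : Fin n, i ≠ j → I i ≠ I j) := by
  refine ⟨fun i j hij => partA hI hπ hij, ?_, ?_⟩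
  · -- no partition → distinct
    intro hno i j hij hIJ
    apply hno
    set A := cycIco i j with hA
    set B := cycIco j i with hB
    have hiA : i ∈ A := self_mem_cycIco hij
    have hjB : j ∈ B := self_mem_cycIco (Ne.symm hij)
    have hcompl : ∀ x, x ∈ B ↔ x ∉ A := mem_cycIco_compl hij
    have hABne : A ≠ B := fun h => (hcompl i).mp (h ▸ hiA) hiA
    have hdisj : Disjoint A B := Finset.disjoint_left.mpr fun x hx hx' => (hcompl x).mp hx' hx
    refine ⟨⟨{A, B}, (Finset.supIndep_pair hABne).mpr hdisj, ?sup, ?bot⟩, ?nc, ?card, ?inv⟩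
    case sup =>
      rw [Finset.sup_insert, Finset.sup_singleton, id]
      apply Finset.eq_univ_of_forall
      intro x
      rcases (em (x ∈ A)) with h | h
      · exact Finset.mem_union_left _ h
      · exact Finset.mem_union_right _ ((hcompl x).mpr h)
    case bot =>
      intro hbot
      simp only [Finset.bot_eq_empty, Finset.mem_insert, Finset.mem_singleton] at hbot
      rcases hbot with h | h
      · rw [← h] at hiA; exact absurd hiA (Finset.notMem_empty i)
      · rw [← h] at hjB; exact absurd hjB (Finset.notMem_empty j)
    case nc =>
      intro a b c d hord S hS T hT haS hcS hbT hdT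
      simp only [Finset.mem_insert, Finset.mem_singleton] at hS hT
      rcases hS with rfl | rfl <;> rcases hT with rfl | rfl <;>
        first
          | rfl
          | exact absurd hord (not_crossed haS hcS ((hcompl b).mp hbT) ((hcompl d).mp hdT))
          | exact absurd hord (not_crossed haS hcS
              ((mem_cycIco_compl (Ne.symm hij) b).mp hbT)
              ((mem_cycIco_compl (Ne.symm hij) d).mp hdT))
    case card => exact (Finset.card_pair hABne).ge
    case inv =>
      intro S hS x hx
      simp only [Finset.mem_insert, Finset.mem_singleton] at hS
      rcases hS with rfl | rfl
      · exact (partA hI hπ hij).mp hIJ x hx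
      · exact compl_invariant hI hπ hij ((partA hI hπ hij).mp hIJ) x hx
  · -- distinct → no partition
    rintro hdis ⟨P, hnc, hcard, hinv⟩
    by_cases hex : ∃ T ∈ P.parts, ∃ a ∈ T, a - 1 ∉ T
    · obtain ⟨T, hT, a, haT, hpred⟩ := hex
      have hTne : T.Nonempty := ⟨a, haT⟩
      obtain ⟨c, hcT, hub⟩ := T.exists_max_image (cpos a) hTne
      have hgn : cpos a c < n - 1 := by
        have h1 : cpos a c < n := cpos_lt a c
        have h2 : cpos a c ≠ n - 1 := by
          intro h
          have : cpos a c = cpos a (a - 1) := by rw [h, cpos_pred]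
          exact hpred (cpos_inj this ▸ hcT)
        omega
      set j := c + 1 with hj
      have hcj : cpos a j = cpos a c + 1 := by
        have hc_eq : a + ((cpos a c : ℕ) : Fin n) = c := add_cpos a c
        have hj2 : j = a + ((cpos a c + 1 : ℕ) : Fin n) := by
          rw [hj]
          conv_lhs => rw [← hc_eq]
          push_cast; abel
        rw [hj2]; exact cpos_add_nat a (by omega)
      have haj : a ≠ j := by
        intro h
        have h2 := hcj
        rw [← h, cpos_self] at h2; omega
      have hinvJ : ∀ x ∈ cycIco a j, π x ∈ cycIco a j := by
        have hTJ : T ⊆ cycIco a j := fun x hx => by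
          rw [mem_cycIco, hcj]; exact Nat.lt_succ_of_le (hub x hx)
        intro x hx
        obtain ⟨T', hT', hxT'⟩ := P.exists_mem (Finset.mem_univ x)
        by_cases hTT : T' = T
        · exact hTJ (hinv T hT x (hTT ▸ hxT'))
        · have hT'J : T' ⊆ cycIco a j := by
            intro z hzT'
            by_contra hzJ
            have hxa : x ≠ a := fun h => hTT (P.eq_of_mem_parts hT' hT (h ▸ hxT') haT)
            have hxc : x ≠ c := fun h => hTT (P.eq_of_mem_parts hT' hT (h ▸ hxT') hcT)
            have h1 : 0 < cpos a x := cpos_pos (Ne.symm hxa)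
            have h2 : cpos a x < cpos a c := by
              have hle : cpos a x < cpos a c + 1 := hcj ▸ mem_cycIco.mp hx
              have hne : cpos a x ≠ cpos a c := fun h => hxc (cpos_inj h)
              omega
            have h3 : cpos a c < cpos a z := by
              have := mem_cycIco.not.mp hzJ
              rw [hcj] at this; omega
            exact hTT (hnc a x c z ⟨h1, h2, h3⟩ T hT T' hT' haT hcT hxT' hzT').symm
          exact hT'J (hinv T' hT' x hxT')
      exact hdis a j haj ((partA hI hπ haj).mpr hinvJ)
    · push_neg at hex
      have huniv : ∀ T ∈ P.parts, T = Finset.univ := fun T hT =>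
        closed_pred_eq_univ (P.nonempty_of_mem_parts hT) (hex T hT)
      obtain ⟨S, hS, T, hT, hST⟩ := Finset.one_lt_card.mp hcard
      exact hST ((huniv S hS).trans (huniv T hT).symm)


end Stmt6Aux

/-- A Grassmann necklace has connected decorated permutation iff its members
are pairwise distinct; more precisely, for i ≠ j, I_i = I_j iff π maps the
cyclic interval [i,j) to itself. -/
theorem stmt_6 {n k : ℕ} [NeZero n] (I : Fin n → Finset (Fin n))
    (hI : IsGrassmannNecklace k I) (π : Equiv.Perm (Fin n))
    (hπ : ∀ i : Fin n, (i ∈ I i → I (i + 1) = insert (π i) (I i \ {i})) ∧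
      (i ∉ I i → π i = i)) :
    (∀ i j : Fin n, i ≠ j → (I i = I j ↔ ∀ x ∈ cycIco i j, π x ∈ cycIco i j)) ∧
    ((¬ ∃ P : Finpartition (Finset.univ : Finset (Fin n)), Noncrossing P ∧
        2 ≤ P.parts.card ∧ ∀ S ∈ P.parts, ∀ x ∈ S, π x ∈ S) ↔
      ∀ i j : Fin n, i ≠ j → I i ≠ I j) := by
  exact Stmt6Aux.stmt6_main hI hπ
end

section
/- Let C be a weakly separated collection in binom([n],k) and let I, J ∈ C with |I∖J| = |J∖I| = 1. Write I∖J = {i}, J∖I = {j}, K = I∩J. Suppose the white clique W(K) = {Ka_1,...,Ka_r} (elements of C containing K, with a's cyclically ordered) and the black clique B(I∪J) = {L∖b_1,...,L∖b_s} both have at least 3 elements. Then either every a_m and every b_m lies in the closed cyclic interval [j,i], or every a_m and every b_m lies in [i,j]; consequently I and J are adjacent in the cyclic boundary of both cliques. -/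
lemma cpos_def {n : ℕ} (i a : Fin n) :
    cpos i a = if i.val ≤ a.val then a.val - i.val else a.val + n - i.val := by
  unfold cpos
  have hi := i.isLt; have ha := a.isLt
  rw [Fin.sub_def]
  simp only
  split_ifs with hle
  · have h : n - i.val + a.val = (a.val - i.val) + n := by omega
    rw [h, Nat.add_mod_right, Nat.mod_eq_of_lt (by omega)]
  · rw [Nat.mod_eq_of_lt (by omega)]; omega

lemma cpos_lt_n {n : ℕ} (i a : Fin n) : cpos i a < n := (a - i).isLt

lemma cpos_self {n : ℕ} (i : Fin n) : cpos i i = 0 := by rw [cpos_def]; simp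

lemma cpos_inj {n : ℕ} (i : Fin n) {a b : Fin n} (h : cpos i a = cpos i b) : a = b := by
  haveI : NeZero n := ⟨by have := i.pos; omega⟩
  have h2 : a - i = b - i := Fin.val_injective h
  have := congrArg (· + i) h2
  simpa [sub_add_cancel] using this

lemma cpos_eq_zero {n : ℕ} (i a : Fin n) (h : cpos i a = 0) : a = i :=
  cpos_inj i (by rw [h, cpos_self])

lemma interlace {n : ℕ} {i a j b : Fin n} (h1 : 0 < cpos i a)
    (h2 : cpos i a < cpos i j) (h3 : cpos i j < cpos i b) :
    CyclicallyOrdered a j b i := by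
  have hb := cpos_lt_n i b
  have hi := i.isLt; have ha := a.isLt; have hj := j.isLt; have hb' := b.isLt
  unfold CyclicallyOrdered
  simp only [cpos_def] at h1 h2 h3 hb ⊢
  split_ifs at * <;> omega

lemma cposTrans {n : ℕ} {i j x : Fin n} (hij : i ≠ j) (h : cpos i j ≤ cpos i x) :
    cpos j x ≤ cpos j i := by
  have hne : i.val ≠ j.val := fun hh => hij (Fin.val_injective hh)
  have hi := i.isLt; have hj := j.isLt; have hx := x.isLt
  simp only [cpos_def] at h ⊢
  split_ifs at * <;> omega

/-- If I, J are neighbors in a weakly separated collection C with nontrivial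
white clique W(I∩J) and black clique B(I∪J), then all the clique elements lie
in the closed cyclic interval [i,j], or all lie in [j,i]. -/
theorem stmt_10 {n k : ℕ} (C : Finset (Finset (Fin n)))
    (hCk : ∀ X ∈ C, X.card = k) (hC : IsWSCollection C)
    (I J : Finset (Fin n)) (hI : I ∈ C) (hJ : J ∈ C) (i j : Fin n)
    (hiD : I \ J = {i}) (hjD : J \ I = {j})
    (hW : 3 ≤ (C.filter (fun X => I ∩ J ⊆ X)).card)
    (hB : 3 ≤ (C.filter (fun X => X ⊆ I ∪ J)).card) :
    ((∀ X ∈ C.filter (fun X => I ∩ J ⊆ X), ∀ x ∈ X \ (I ∩ J), x ∈ cycIcc i j) ∧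
     (∀ Y ∈ C.filter (fun Y => Y ⊆ I ∪ J), ∀ y ∈ (I ∪ J) \ Y, y ∈ cycIcc i j)) ∨
    ((∀ X ∈ C.filter (fun X => I ∩ J ⊆ X), ∀ x ∈ X \ (I ∩ J), x ∈ cycIcc j i) ∧
     (∀ Y ∈ C.filter (fun Y => Y ⊆ I ∪ J), ∀ y ∈ (I ∪ J) \ Y, y ∈ cycIcc j i)) := by
  classical
  -- basic membership facts
  have hiIJ : i ∈ I \ J := by rw [hiD]; exact Finset.mem_singleton_self i
  have hjJI : j ∈ J \ I := by rw [hjD]; exact Finset.mem_singleton_self j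
  have hiI : i ∈ I := (Finset.mem_sdiff.mp hiIJ).1
  have hiJ : i ∉ J := (Finset.mem_sdiff.mp hiIJ).2
  have hjJ : j ∈ J := (Finset.mem_sdiff.mp hjJI).1
  have hjI : j ∉ I := (Finset.mem_sdiff.mp hjJI).2
  have hij : i ≠ j := fun h => hiJ (h ▸ hjJ)
  -- cardinalities
  have hIcard : I.card = k := hCk I hI
  have hJcard : J.card = k := hCk J hJ
  have hKcard : (I ∩ J).card + 1 = k := by
    have h := Finset.card_sdiff_add_card_inter I J
    rw [hiD] at h; simp at h; omega
  have hLcard : (I ∪ J).card = k + 1 := by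
    have h := Finset.card_union_add_card_inter I J
    omega
  -- structure of white / black clique elements
  have hwhite : ∀ X ∈ C, I ∩ J ⊆ X → ∃ a, X \ (I ∩ J) = {a} := by
    intro X hX hKX
    refine Finset.card_eq_one.mp ?_
    rw [Finset.card_sdiff_of_subset hKX, hCk X hX]; omega
  have hblack : ∀ Y ∈ C, Y ⊆ I ∪ J → ∃ b, (I ∪ J) \ Y = {b} := by
    intro Y hY hYL
    refine Finset.card_eq_one.mp ?_
    rw [Finset.card_sdiff_of_subset hYL, hLcard, hCk Y hY]; omega
  have hIK : I \ (I ∩ J) = {i} := by rw [Finset.sdiff_inter_self_left, hiD]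
  have hJK : J \ (I ∩ J) = {j} := by
    rw [Finset.inter_comm, Finset.sdiff_inter_self_left, hjD]
  have hrecon : ∀ X : Finset (Fin n), I ∩ J ⊆ X → ∀ a : Fin n,
      X \ (I ∩ J) = {a} → X = I ∩ J ∪ {a} := by
    intro X hs a hXa
    rw [← hXa, Finset.union_sdiff_of_subset hs]
  -- an element outside I∩J and different from i,j is outside I∪J
  have hnotL : ∀ a : Fin n, a ∉ I ∩ J → a ≠ i → a ≠ j → a ∉ I ∪ J := by
    intro a hK hai haj hmem
    rcases Finset.mem_union.mp hmem with h | h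
    · by_cases hJ' : a ∈ J
      · exact hK (Finset.mem_inter.mpr ⟨h, hJ'⟩)
      · have : a ∈ I \ J := Finset.mem_sdiff.mpr ⟨h, hJ'⟩
        rw [hiD] at this; exact hai (Finset.mem_singleton.mp this)
    · by_cases hI' : a ∈ I
      · exact hK (Finset.mem_inter.mpr ⟨hI', h⟩)
      · have : a ∈ J \ I := Finset.mem_sdiff.mpr ⟨h, hI'⟩
        rw [hjD] at this; exact haj (Finset.mem_singleton.mp this)
  have hinK : ∀ b : Fin n, b ∈ I ∪ J → b ≠ i → b ≠ j → b ∈ I ∩ J := by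
    intro b hmem hbi hbj
    by_contra h
    exact hnotL b h hbi hbj hmem
  -- the key pairwise lemma
  have hpair : ∀ X ∈ C, ∀ a : Fin n, I ∩ J ⊆ X → X \ (I ∩ J) = {a} → a ≠ i → a ≠ j →
      ∀ Y ∈ C, ∀ b : Fin n, Y ⊆ I ∪ J → (I ∪ J) \ Y = {b} → b ≠ i → b ≠ j →
      (cpos i a < cpos i j ↔ cpos i b < cpos i j) := by
    intro X hX a hKX hXa hai haj Y hY b hYL hYb hbi hbj
    have haX : a ∈ X \ (I ∩ J) := by rw [hXa]; exact Finset.mem_singleton_self a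
    have haX' : a ∈ X := (Finset.mem_sdiff.mp haX).1
    have haK : a ∉ I ∩ J := (Finset.mem_sdiff.mp haX).2
    have haL : a ∉ I ∪ J := hnotL a haK hai haj
    have haY : a ∉ Y := fun h => haL (hYL h)
    have hbL : b ∈ (I ∪ J) \ Y := by rw [hYb]; exact Finset.mem_singleton_self b
    have hbK : b ∈ I ∩ J := hinK b (Finset.mem_sdiff.mp hbL).1 hbi hbj
    have hbX : b ∈ X := hKX hbK
    have hbY : b ∉ Y := (Finset.mem_sdiff.mp hbL).2
    have hiY : i ∈ Y := by
      by_contra h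
      have : i ∈ (I ∪ J) \ Y := Finset.mem_sdiff.mpr ⟨Finset.mem_union_left _ hiI, h⟩
      rw [hYb] at this
      exact hbi (Finset.mem_singleton.mp this).symm
    have hjY : j ∈ Y := by
      by_contra h
      have : j ∈ (I ∪ J) \ Y := Finset.mem_sdiff.mpr ⟨Finset.mem_union_right _ hjJ, h⟩
      rw [hYb] at this
      exact hbj (Finset.mem_singleton.mp this).symm
    have hiX : i ∉ X := by
      intro h
      have : i ∈ X \ (I ∩ J) :=
        Finset.mem_sdiff.mpr ⟨h, fun hk => hiJ (Finset.mem_inter.mp hk).2⟩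
      rw [hXa] at this
      exact hai (Finset.mem_singleton.mp this).symm
    have hjX : j ∉ X := by
      intro h
      have : j ∈ X \ (I ∩ J) :=
        Finset.mem_sdiff.mpr ⟨h, fun hk => hjI (Finset.mem_inter.mp hk).1⟩
      rw [hXa] at this
      exact haj (Finset.mem_singleton.mp this).symm
    have hda : cpos i a ≠ cpos i j := fun h => haj (cpos_inj i h)
    have hda0 : 0 < cpos i a :=
      Nat.pos_of_ne_zero (fun h => hai (cpos_eq_zero i a h))
    have hdb : cpos i b ≠ cpos i j := fun h => hbj (cpos_inj i h)
    have hdb0 : 0 < cpos i b :=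
      Nat.pos_of_ne_zero (fun h => hbi (cpos_eq_zero i b h))
    have hWS := hC X hX Y hY
    constructor
    · intro hlt
      by_contra hge
      have h3 : cpos i j < cpos i b := lt_of_le_of_ne (not_lt.mp hge) (Ne.symm hdb)
      exact hWS ⟨a, j, b, i, interlace hda0 hlt h3,
        Finset.mem_sdiff.mpr ⟨haX', haY⟩, Finset.mem_sdiff.mpr ⟨hbX, hbY⟩,
        Finset.mem_sdiff.mpr ⟨hjY, hjX⟩, Finset.mem_sdiff.mpr ⟨hiY, hiX⟩⟩
    · intro hlt
      by_contra hge
      have h3 : cpos i j < cpos i a := lt_of_le_of_ne (not_lt.mp hge) (Ne.symm hda)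
      exact hWS ⟨b, j, a, i, interlace hdb0 hlt h3,
        Finset.mem_sdiff.mpr ⟨hbX, hbY⟩, Finset.mem_sdiff.mpr ⟨haX', haY⟩,
        Finset.mem_sdiff.mpr ⟨hjY, hjX⟩, Finset.mem_sdiff.mpr ⟨hiY, hiX⟩⟩
  -- find a white clique element different from I and J
  have hexW : ∃ X₀ ∈ C.filter (fun X => I ∩ J ⊆ X), X₀ ≠ I ∧ X₀ ≠ J := by
    have hsub : ({I, J} : Finset (Finset (Fin n))) ⊆ C.filter (fun X => I ∩ J ⊆ X) := by
      intro X hX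
      rcases Finset.mem_insert.mp hX with h | h
      · subst h; exact Finset.mem_filter.mpr ⟨hI, Finset.inter_subset_left⟩
      · rw [Finset.mem_singleton.mp h]
        exact Finset.mem_filter.mpr ⟨hJ, Finset.inter_subset_right⟩
    have hIJcard : ({I, J} : Finset (Finset (Fin n))).card ≤ 2 :=
      (Finset.card_insert_le _ _).trans (by simp)
    have := Finset.le_card_sdiff ({I, J} : Finset (Finset (Fin n)))
      (C.filter (fun X => I ∩ J ⊆ X))
    have hpos : 0 < ((C.filter (fun X => I ∩ J ⊆ X)) \ {I, J}).card := by omega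
    obtain ⟨X₀, hX₀⟩ := Finset.card_pos.mp hpos
    have h1 := (Finset.mem_sdiff.mp hX₀).1
    have h2 := (Finset.mem_sdiff.mp hX₀).2
    refine ⟨X₀, h1, ?_, ?_⟩
    · intro h; exact h2 (by rw [h]; exact Finset.mem_insert_self _ _)
    · intro h; exact h2 (by rw [h]; simp)
  have hexB : ∃ Y₀ ∈ C.filter (fun Y => Y ⊆ I ∪ J), Y₀ ≠ I ∧ Y₀ ≠ J := by
    have hsub : ({I, J} : Finset (Finset (Fin n))) ⊆ C.filter (fun Y => Y ⊆ I ∪ J) := by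
      intro X hX
      rcases Finset.mem_insert.mp hX with h | h
      · subst h; exact Finset.mem_filter.mpr ⟨hI, Finset.subset_union_left⟩
      · rw [Finset.mem_singleton.mp h]
        exact Finset.mem_filter.mpr ⟨hJ, Finset.subset_union_right⟩
    have hIJcard : ({I, J} : Finset (Finset (Fin n))).card ≤ 2 :=
      (Finset.card_insert_le _ _).trans (by simp)
    have := Finset.le_card_sdiff ({I, J} : Finset (Finset (Fin n)))
      (C.filter (fun Y => Y ⊆ I ∪ J))
    have hpos : 0 < ((C.filter (fun Y => Y ⊆ I ∪ J)) \ {I, J}).card := by omega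
    obtain ⟨Y₀, hY₀⟩ := Finset.card_pos.mp hpos
    have h1 := (Finset.mem_sdiff.mp hY₀).1
    have h2 := (Finset.mem_sdiff.mp hY₀).2
    refine ⟨Y₀, h1, ?_, ?_⟩
    · intro h; exact h2 (by rw [h]; exact Finset.mem_insert_self _ _)
    · intro h; exact h2 (by rw [h]; simp)
  obtain ⟨X₀, hX₀W, hX₀I, hX₀J⟩ := hexW
  obtain ⟨Y₀, hY₀B, hY₀I, hY₀J⟩ := hexB
  have hX₀C : X₀ ∈ C := (Finset.mem_filter.mp hX₀W).1
  have hX₀K : I ∩ J ⊆ X₀ := (Finset.mem_filter.mp hX₀W).2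
  have hY₀C : Y₀ ∈ C := (Finset.mem_filter.mp hY₀B).1
  have hY₀L : Y₀ ⊆ I ∪ J := (Finset.mem_filter.mp hY₀B).2
  obtain ⟨a₀, ha₀⟩ := hwhite X₀ hX₀C hX₀K
  obtain ⟨b₀, hb₀⟩ := hblack Y₀ hY₀C hY₀L
  have ha₀i : a₀ ≠ i := by
    intro h; subst h
    exact hX₀I (by rw [hrecon X₀ hX₀K a₀ ha₀, ← hIK,
      Finset.union_sdiff_of_subset Finset.inter_subset_left])
  have ha₀j : a₀ ≠ j := by
    intro h; subst h
    exact hX₀J (by rw [hrecon X₀ hX₀K a₀ ha₀, ← hJK,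
      Finset.union_sdiff_of_subset Finset.inter_subset_right])
  -- black reconstruction: Y = (I∪J) \ ((I∪J)\Y)
  have hbrecon : ∀ Y : Finset (Fin n), Y ⊆ I ∪ J → ∀ b : Fin n,
      (I ∪ J) \ Y = {b} → Y = (I ∪ J) \ {b} := by
    intro Y hYL b hYb
    rw [← hYb, Finset.sdiff_sdiff_eq_self hYL]
  have hLJ : (I ∪ J) \ {i} = J := by
    have h : (I ∪ J) \ J = {i} := by rw [Finset.union_sdiff_right, hiD]
    rw [← h, Finset.sdiff_sdiff_eq_self Finset.subset_union_right]
  have hLI : (I ∪ J) \ {j} = I := by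
    have h : (I ∪ J) \ I = {j} := by
      rw [Finset.union_sdiff_left, hjD]
    rw [← h, Finset.sdiff_sdiff_eq_self Finset.subset_union_left]
  have hb₀i : b₀ ≠ i := by
    intro h; subst h
    exact hY₀J (by rw [hbrecon Y₀ hY₀L b₀ hb₀, hLJ])
  have hb₀j : b₀ ≠ j := by
    intro h; subst h
    exact hY₀I (by rw [hbrecon Y₀ hY₀L b₀ hb₀, hLI])
  -- memberships in the cyclic intervals
  have hmemIcc : ∀ x : Fin n, cpos i x ≤ cpos i j → x ∈ cycIcc i j := by
    intro x h; exact Finset.mem_filter.mpr ⟨Finset.mem_univ x, h⟩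
  have hmemIcc' : ∀ x : Fin n, cpos j x ≤ cpos j i → x ∈ cycIcc j i := by
    intro x h; exact Finset.mem_filter.mpr ⟨Finset.mem_univ x, h⟩
  by_cases hside : cpos i a₀ < cpos i j
  · left
    have hb₀side : cpos i b₀ < cpos i j :=
      (hpair X₀ hX₀C a₀ hX₀K ha₀ ha₀i ha₀j Y₀ hY₀C b₀ hY₀L hb₀ hb₀i hb₀j).mp hside
    constructor
    · intro X hX x hx
      have hXC := (Finset.mem_filter.mp hX).1
      have hXK := (Finset.mem_filter.mp hX).2
      obtain ⟨aX, haX⟩ := hwhite X hXC hXK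
      have hxa : x = aX := by rw [haX] at hx; exact Finset.mem_singleton.mp hx
      subst hxa
      by_cases h1 : x = i
      · subst h1; exact hmemIcc _ (by rw [cpos_self]; omega)
      by_cases h2 : x = j
      · subst h2; exact hmemIcc _ le_rfl
      exact hmemIcc _ (le_of_lt
        ((hpair X hXC x hXK haX h1 h2 Y₀ hY₀C b₀ hY₀L hb₀ hb₀i hb₀j).mpr hb₀side))
    · intro Y hY y hy
      have hYC := (Finset.mem_filter.mp hY).1
      have hYL' := (Finset.mem_filter.mp hY).2
      obtain ⟨bY, hbY⟩ := hblack Y hYC hYL'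
      have hyb : y = bY := by rw [hbY] at hy; exact Finset.mem_singleton.mp hy
      subst hyb
      by_cases h1 : y = i
      · subst h1; exact hmemIcc _ (by rw [cpos_self]; omega)
      by_cases h2 : y = j
      · subst h2; exact hmemIcc _ le_rfl
      exact hmemIcc _ (le_of_lt
        ((hpair X₀ hX₀C a₀ hX₀K ha₀ ha₀i ha₀j Y hYC y hYL' hbY h1 h2).mp hside))
  · right
    have hb₀side : ¬ cpos i b₀ < cpos i j := fun h =>
      hside ((hpair X₀ hX₀C a₀ hX₀K ha₀ ha₀i ha₀j Y₀ hY₀C b₀ hY₀L hb₀ hb₀i hb₀j).mpr h)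
    constructor
    · intro X hX x hx
      have hXC := (Finset.mem_filter.mp hX).1
      have hXK := (Finset.mem_filter.mp hX).2
      obtain ⟨aX, haX⟩ := hwhite X hXC hXK
      have hxa : x = aX := by rw [haX] at hx; exact Finset.mem_singleton.mp hx
      subst hxa
      by_cases h1 : x = i
      · subst h1; exact hmemIcc' _ le_rfl
      by_cases h2 : x = j
      · subst h2; exact hmemIcc' _ (by rw [cpos_self]; omega)
      have hxn : ¬ cpos i x < cpos i j := fun h =>
        hb₀side ((hpair X hXC x hXK haX h1 h2 Y₀ hY₀C b₀ hY₀L hb₀ hb₀i hb₀j).mp h)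
      exact hmemIcc' _ (cposTrans hij (not_lt.mp hxn))
    · intro Y hY y hy
      have hYC := (Finset.mem_filter.mp hY).1
      have hYL' := (Finset.mem_filter.mp hY).2
      obtain ⟨bY, hbY⟩ := hblack Y hYC hYL'
      have hyb : y = bY := by rw [hbY] at hy; exact Finset.mem_singleton.mp hy
      subst hyb
      by_cases h1 : y = i
      · subst h1; exact hmemIcc' _ le_rfl
      by_cases h2 : y = j
      · subst h2; exact hmemIcc' _ (by rw [cpos_self]; omega)
      have hyn : ¬ cpos i y < cpos i j := fun h =>
        hside ((hpair X₀ hX₀C a₀ hX₀K ha₀ ha₀i ha₀j Y hYC y hYL' hbY h1 h2).mpr h)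
      exact hmemIcc' _ (cposTrans hij (not_lt.mp hyn))
end

section
/- For a permutation w ∈ S_m, let ŵ be the permutation of [2m] given by ŵ(i) = 2m+1−i for i ∈ [m] and ŵ(m+j) = w^{-1}(m+1−j) for j ∈ [m]. Then the number of alignments of ŵ equals 2·binom(m,2) − ℓ(w), and hence ℓ(ŵ) := m² − A(ŵ) = m + ℓ(w), where ℓ(w) is the number of inversions of w. -/
/-- Number of alignments of a permutation: pairs {i,j} with i, π(i), π(j), j
cyclically ordered and all distinct (each unordered alignment admits exactly
one such ordering). -/
def alignCount {N : ℕ} (π : Equiv.Perm (Fin N)) : ℕ :=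
  (Finset.univ.filter
    (fun p : Fin N × Fin N => CyclicallyOrdered p.1 (π p.1) (π p.2) p.2)).card

/-- Number of inversions (Coxeter length) of w ∈ S_m. -/
def invCount {m : ℕ} (w : Equiv.Perm (Fin m)) : ℕ :=
  (Finset.univ.filter (fun p : Fin m × Fin m => p.1 < p.2 ∧ w p.2 < w p.1)).card

lemma cpos_val' {n : ℕ} (i x : Fin n) :
    cpos i x = if (i:ℕ) ≤ (x:ℕ) then (x:ℕ) - (i:ℕ) else n + (x:ℕ) - (i:ℕ) := by
  have hi := i.is_lt
  have hx := x.is_lt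
  unfold cpos
  rw [Fin.sub_def]
  rcases le_or_gt (i:ℕ) (x:ℕ) with h | h
  · rw [if_pos h]
    show ((n - (i:ℕ)) + (x:ℕ)) % n = _
    have e : (n - (i:ℕ)) + (x:ℕ) = n + ((x:ℕ) - (i:ℕ)) := by omega
    rw [e, Nat.add_mod_left, Nat.mod_eq_of_lt (by omega)]
  · rw [if_neg (by omega)]
    show ((n - (i:ℕ)) + (x:ℕ)) % n = _
    rw [Nat.mod_eq_of_lt (by omega)]
    omega

lemma two_choose_add (m : ℕ) : 2 * m.choose 2 + m = m * m := by
  induction m with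
  | zero => simp
  | succ k ih =>
    have h1 : (k+1).choose 2 = k.choose 1 + k.choose 2 := Nat.choose_succ_succ k 1
    have h2 : k.choose 1 = k := Nat.choose_one_right k
    have h3 : (k+1)*(k+1) = k*k + 2*k + 1 := by ring
    omega

lemma card_pairs_gt (m : ℕ) :
    (Finset.univ.filter fun p : Fin m × Fin m => (p.2:ℕ) < (p.1:ℕ)).card = m.choose 2 := by
  rw [Finset.card_filter, Fintype.sum_prod_type]
  have h1 : ∀ i : Fin m, (∑ j : Fin m, if (j:ℕ) < (i:ℕ) then (1:ℕ) else 0) = (i:ℕ) := by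
    intro i
    rw [← Finset.card_filter]
    have : (Finset.univ.filter fun j : Fin m => (j:ℕ) < (i:ℕ)) = Finset.Iio i := by
      ext j
      simp only [Finset.mem_filter, Finset.mem_univ, true_and, Finset.mem_Iio, Fin.lt_def]
    rw [this, Fin.card_Iio]
  simp only [h1]
  rw [Fin.sum_univ_eq_sum_range (fun i => i) m]
  have h2 := Finset.sum_range_id_mul_two m
  have h3 := two_choose_add m
  have h4 : m * m = m * (m-1) + m := by
    cases m with
    | zero => simp
    | succ k => simp only [Nat.succ_sub_one]; ring
  omega
/-- For ŵ = [2m, 2m−1, …, m+1, w⁻¹(m), …, w⁻¹(1)] ∈ S_{2m}, the number of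
alignments is 2·C(m,2) − ℓ(w), hence ℓ(ŵ) = m² − A(ŵ) = m + ℓ(w). -/
theorem stmt_15 {m : ℕ} (hm : 0 < m) (w : Equiv.Perm (Fin m))
    (π : Equiv.Perm (Fin (2 * m)))
    (hπ : ∀ i : Fin (2 * m),
      ((i : ℕ) < m → (π i : ℕ) = 2 * m - 1 - (i : ℕ)) ∧
      (∀ j : Fin m, (i : ℕ) = m + (j : ℕ) → (π i : ℕ) = (w.symm j.rev : ℕ))) :
    alignCount π + invCount w = 2 * Nat.choose m 2 ∧
    m * m = alignCount π + m + invCount w := by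
  set g : Fin (2*m) → Fin m := fun i => ⟨(2*m - 1 - (i:ℕ)) % m, Nat.mod_lt _ hm⟩ with hgdef
  have hgval : ∀ i : Fin (2*m), m ≤ (i:ℕ) → (g i : ℕ) = 2*m - 1 - (i:ℕ) := by
    intro i hi
    have h := i.is_lt
    show (2*m - 1 - (i:ℕ)) % m = _
    exact Nat.mod_eq_of_lt (by omega)
  have hgmod : ∀ i : Fin (2*m), m ≤ (i:ℕ) → (2*m - 1 - (i:ℕ)) % m = 2*m - 1 - (i:ℕ) := by
    intro i hi
    have h := i.is_lt
    exact Nat.mod_eq_of_lt (by omega)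
  have hA : ∀ i : Fin (2*m), (i:ℕ) < m → (π i : ℕ) = 2*m - 1 - (i:ℕ) := fun i hi => (hπ i).1 hi
  have hB : ∀ i : Fin (2*m), m ≤ (i:ℕ) → (π i : ℕ) = (w.symm (g i) : ℕ) := by
    intro i hi
    have hlt := i.is_lt
    have hj : (i:ℕ) - m < m := by omega
    have h := (hπ i).2 ⟨(i:ℕ) - m, hj⟩ (by simp; omega)
    rw [h]
    have hrev : (⟨(i:ℕ)-m, hj⟩ : Fin m).rev = g i := by
      apply Fin.ext
      rw [Fin.val_rev, hgval i hi]
      simp only []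
      omega
    rw [hrev]
  -- key characterization of alignments
  have key : ∀ p : Fin (2*m) × Fin (2*m),
      CyclicallyOrdered p.1 (π p.1) (π p.2) p.2 ↔
        (((p.2:ℕ) < (p.1:ℕ) ∧ (p.1:ℕ) < m) ∨
         (m ≤ (p.2:ℕ) ∧ (p.2:ℕ) < (p.1:ℕ) ∧
           (w.symm (g p.1) : ℕ) < (w.symm (g p.2) : ℕ))) := by
    rintro ⟨i, j⟩
    dsimp only
    unfold CyclicallyOrdered
    simp only [cpos_val']
    have hi := i.is_lt; have hj := j.is_lt
    have hu := (w.symm (g i)).is_lt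
    have hv := (w.symm (g j)).is_lt
    rcases le_or_gt m (i:ℕ) with h1 | h1 <;> rcases le_or_gt m (j:ℕ) with h2 | h2
    · rw [hB i h1, hB j h2]; split_ifs <;> omega
    · rw [hB i h1, hA j h2]; split_ifs <;> omega
    · rw [hA i h1, hB j h2]; split_ifs <;> omega
    · rw [hA i h1, hA j h2]; split_ifs <;> omega
  have hsplit : alignCount π =
      (Finset.univ.filter fun p : Fin (2*m) × Fin (2*m) =>
        (p.2:ℕ) < (p.1:ℕ) ∧ (p.1:ℕ) < m).card +
      (Finset.univ.filter fun p : Fin (2*m) × Fin (2*m) =>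
        m ≤ (p.2:ℕ) ∧ (p.2:ℕ) < (p.1:ℕ) ∧
          (w.symm (g p.1) : ℕ) < (w.symm (g p.2) : ℕ)).card := by
    unfold alignCount
    rw [Finset.filter_congr (fun p _ => key p), Finset.filter_or,
      Finset.card_union_of_disjoint]
    rw [Finset.disjoint_left]
    intro p hp1 hp2
    simp only [Finset.mem_filter] at hp1 hp2
    omega
  -- first piece
  have hc1 : (Finset.univ.filter fun p : Fin (2*m) × Fin (2*m) =>
      (p.2:ℕ) < (p.1:ℕ) ∧ (p.1:ℕ) < m).card = m.choose 2 := by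
    rw [← card_pairs_gt m]
    apply Finset.card_nbij'
      (i := fun p => (⟨(p.1:ℕ) % m, Nat.mod_lt _ hm⟩, ⟨(p.2:ℕ) % m, Nat.mod_lt _ hm⟩))
      (j := fun q => (Fin.castLE (by omega) q.1, Fin.castLE (by omega) q.2))
    · intro p hp
      simp only [Finset.mem_coe, Finset.mem_filter, Finset.mem_univ, true_and] at hp ⊢
      rw [Nat.mod_eq_of_lt (by omega), Nat.mod_eq_of_lt (by omega)]
      omega
    · intro q hq
      simp only [Finset.mem_coe, Finset.mem_filter, Finset.mem_univ, true_and, Fin.coe_castLE] at hq ⊢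
      exact ⟨hq, q.1.is_lt⟩
    · intro p hp
      simp only [Finset.mem_coe, Finset.mem_filter, Finset.mem_univ, true_and] at hp
      apply Prod.ext <;> apply Fin.ext <;>
        simp only [Fin.coe_castLE] <;>
        exact Nat.mod_eq_of_lt (by omega)
    · intro q hq
      apply Prod.ext <;> apply Fin.ext <;>
        simp only [Fin.coe_castLE] <;>
        exact Nat.mod_eq_of_lt (by omega)
  -- second piece
  have hc2 : (Finset.univ.filter fun p : Fin (2*m) × Fin (2*m) =>
      m ≤ (p.2:ℕ) ∧ (p.2:ℕ) < (p.1:ℕ) ∧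
        (w.symm (g p.1) : ℕ) < (w.symm (g p.2) : ℕ)).card =
      (Finset.univ.filter fun q : Fin m × Fin m =>
        (q.1:ℕ) < (q.2:ℕ) ∧ (w.symm q.1 : ℕ) < (w.symm q.2 : ℕ)).card := by
    have hginv : ∀ a : Fin m, g ⟨2*m - 1 - (a:ℕ), by omega⟩ = a := by
      intro a
      have := a.is_lt
      apply Fin.ext
      show (2*m - 1 - (2*m - 1 - (a:ℕ))) % m = (a:ℕ)
      rw [Nat.mod_eq_of_lt (by omega)]
      omega
    apply Finset.card_nbij'
      (i := fun p => (g p.1, g p.2))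
      (j := fun q => (⟨2*m - 1 - (q.1:ℕ), by omega⟩, ⟨2*m - 1 - (q.2:ℕ), by omega⟩))
    · intro p hp
      simp only [Finset.mem_coe, Finset.mem_filter, Finset.mem_univ, true_and] at hp ⊢
      have h1 := p.1.is_lt
      have e1 := hgmod p.1 (by omega)
      have e2 := hgmod p.2 (by omega)
      have f1 := hgval p.1 (by omega)
      have f2 := hgval p.2 (by omega)
      exact ⟨by omega, hp.2.2⟩
    · intro q hq
      simp only [Finset.mem_coe, Finset.mem_filter, Finset.mem_univ, true_and] at hq ⊢
      have h1 := q.1.is_lt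
      have h2 := q.2.is_lt
      rw [hginv q.1, hginv q.2]
      exact ⟨by omega, by omega, hq.2⟩
    · intro p hp
      simp only [Finset.mem_coe, Finset.mem_filter, Finset.mem_univ, true_and] at hp
      have h1 := p.1.is_lt
      have e1 := hgmod p.1 (by omega)
      have e2 := hgmod p.2 (by omega)
      have f1 := hgval p.1 (by omega)
      have f2 := hgval p.2 (by omega)
      apply Prod.ext <;> apply Fin.ext <;> simp only [] <;> omega
    · intro q hq
      apply Prod.ext
      · exact hginv q.1
      · exact hginv q.2
  -- third piece : relate to non-inversions of w
  have hc3 : (Finset.univ.filter fun q : Fin m × Fin m =>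
        (q.1:ℕ) < (q.2:ℕ) ∧ (w.symm q.1 : ℕ) < (w.symm q.2 : ℕ)).card =
      (Finset.univ.filter fun q : Fin m × Fin m =>
        q.1 < q.2 ∧ w q.1 < w q.2).card := by
    apply Finset.card_nbij' (i := fun q => (w.symm q.1, w.symm q.2))
      (j := fun q => (w q.1, w q.2))
    · intro q hq
      simp only [Finset.mem_coe, Finset.mem_filter, Finset.mem_univ, true_and,
        Equiv.apply_symm_apply] at hq ⊢
      exact ⟨Fin.lt_def.mpr hq.2, Fin.lt_def.mpr hq.1⟩
    · intro q hq
      simp only [Finset.mem_coe, Finset.mem_filter, Finset.mem_univ, true_and,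
        Equiv.symm_apply_apply] at hq ⊢
      exact ⟨Fin.lt_def.mp hq.2, Fin.lt_def.mp hq.1⟩
    · intro q hq
      simp [Prod.ext_iff]
    · intro q hq
      simp [Prod.ext_iff]
  have hc4 : (Finset.univ.filter fun q : Fin m × Fin m =>
        q.1 < q.2 ∧ w q.1 < w q.2).card + invCount w = m.choose 2 := by
    have hs0 : (Finset.univ.filter fun q : Fin m × Fin m => q.1 < q.2).card
        = m.choose 2 := by
      rw [← card_pairs_gt m]
      apply Finset.card_nbij' (i := Prod.swap) (j := Prod.swap) <;>
        intro q hq <;>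
        simp only [Finset.mem_coe, Finset.mem_filter, Finset.mem_univ, true_and, Prod.fst_swap,
          Prod.snd_swap, Prod.swap_swap, Fin.lt_def] at * <;>
        exact hq
    have hsplit2 := Finset.card_filter_add_card_filter_not
      (s := Finset.univ.filter fun q : Fin m × Fin m => q.1 < q.2)
      (p := fun q => w q.1 < w q.2)
    rw [Finset.filter_filter, Finset.filter_filter, hs0] at hsplit2
    have e1 : (Finset.univ.filter fun q : Fin m × Fin m =>
        q.1 < q.2 ∧ w q.1 < w q.2).card =
        (Finset.univ.filter fun q : Fin m × Fin m =>
          q.1 < q.2 ∧ w q.1 < w q.2).card := rfl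
    have e2 : (Finset.univ.filter fun q : Fin m × Fin m =>
        q.1 < q.2 ∧ ¬ w q.1 < w q.2) =
        (Finset.univ.filter fun q : Fin m × Fin m =>
          q.1 < q.2 ∧ w q.2 < w q.1) := by
      apply Finset.filter_congr
      rintro q -
      constructor
      · rintro ⟨h1, h2⟩
        refine ⟨h1, lt_of_le_of_ne (not_lt.mp h2) ?_⟩
        intro he
        exact absurd (w.injective he) (ne_of_gt h1)
      · rintro ⟨h1, h2⟩
        exact ⟨h1, lt_asymm h2⟩
    rw [e2] at hsplit2
    unfold invCount
    convert hsplit2 using 2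
  have htc := two_choose_add m
  omega
end
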